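/- Conditional right decomposition for δ-separation: let G = (V,E) be a directed graph, A, B, C ⊆ V and D ⊆ B with (B ∩ A) \ (C ∪ D) = ∅. If (i) C δ-separates A from B in G (A ir_δ B | C), (ii) C ∪ D δ-separates B from A \ (C ∪ D) in G (B ir_δ A \ (C ∪ D) | C ∪ D), and (iii) for every k ∈ C \ D, either C ∪ B δ-separates A from {k} in G (A ir_δ {k} | C ∪ B) or C ∪ D ∪ A δ-separates B from {k} in G (B ir_δ {k} | C ∪ D ∪ A), then C δ-separates A from D in G (A ir_δ D | C). -/

import Mathlib

open Set

variable {V : Type*}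

/-- There is a directed path (a sequence of ≥ 2 distinct vertices joined by
directed edges) from `v` to `w`; i.e. `v` is an ancestor of `w`. -/
def DirPathConn (E : V → V → Prop) (v w : V) : Prop :=
  ∃ l : List V, l.Chain' E ∧ l.Nodup ∧ 2 ≤ l.length ∧
    l.head? = some v ∧ l.getLast? = some w

/-- `an(A)`: vertices outside `A` that are ancestors of some element of `A`. -/
def anSet (E : V → V → Prop) (A : Set V) : Set V :=
  {v | v ∉ A ∧ ∃ a ∈ A, DirPathConn E v a}

/-- `An(A) = A ∪ an(A)`, the smallest ancestral set containing `A`. -/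
def AnSet (E : V → V → Prop) (A : Set V) : Set V := A ∪ anSet E A

/-- `pa(A)`: parents of `A` outside of `A`. -/
def paSet (E : V → V → Prop) (A : Set V) : Set V :=
  {v | v ∉ A ∧ ∃ a ∈ A, E v a}

/-- `cl(A) = A ∪ pa(A)`, the closure of `A`. -/
def clSet (E : V → V → Prop) (A : Set V) : Set V := A ∪ paSet E A

/-- The induced subgraph `G_A` (as an edge relation on `V` supported on `A`). -/
def inducedGraph (E : V → V → Prop) (A : Set V) : V → V → Prop :=
  fun j k => E j k ∧ j ∈ A ∧ k ∈ A

/-- `G^B`: delete from `G` every directed edge starting in `B`. -/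
def delOut (E : V → V → Prop) (B : Set V) : V → V → Prop :=
  fun j k => E j k ∧ j ∉ B

/-- The moral graph `G^m`: distinct `j, k` are adjacent iff they are joined by
an edge in some direction or have a common child. -/
def moralGraph (E : V → V → Prop) : V → V → Prop :=
  fun j k => j ≠ k ∧ (E j k ∨ E k j ∨ ∃ c, E j c ∧ E k c)

/-- `l` is an undirected path from `v` to `w` in the undirected graph `H`:
a sequence of ≥ 2 distinct vertices, consecutive ones adjacent. -/
def IsUPath (H : V → V → Prop) (l : List V) (v w : V) : Prop :=
  l.Chain' H ∧ l.Nodup ∧ 2 ≤ l.length ∧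
    l.head? = some v ∧ l.getLast? = some w

/-- `A ⊥_g B | C` in the undirected graph `H`: every path from a vertex of `A`
to a vertex of `B` contains a vertex of `C`. -/
def uSep (H : V → V → Prop) (A B C : Set V) : Prop :=
  ∀ v ∈ A, ∀ w ∈ B, ∀ l : List V, IsUPath H l v w → ∃ c ∈ C, c ∈ l

/-- δ-separation for pairwise disjoint `A, B, C`: `A ⊥_g B | C` in the moral
graph of the subgraph of `G^B` induced by `An(A ∪ B ∪ C)`. -/
def deltaSepDisjoint (E : V → V → Prop) (A B C : Set V) : Prop :=
  uSep (moralGraph (inducedGraph (delOut E B) (AnSet E (A ∪ B ∪ C)))) A B C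

/-- δ-separation `A ir_δ B | C` for general (not necessarily disjoint) sets:
`C \ B` δ-separates `A \ (B ∪ C)` from `B`. -/
def deltaSep (E : V → V → Prop) (A B C : Set V) : Prop :=
  deltaSepDisjoint E (A \ (B ∪ C)) B (C \ B)


namespace DeltaAux



lemma mem_of_getLast?_eq {l : List V} {a : V} (h : l.getLast? = some a) : a ∈ l := by
  obtain ⟨h', hx⟩ := List.mem_getLast?_eq_getLast (by rw [h]; rfl : a ∈ l.getLast?)
  exact hx ▸ List.getLast_mem h'

lemma mem_of_head?_eq {l : List V} {a : V} (h : l.head? = some a) : a ∈ l := by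
  cases l with
  | nil => simp at h
  | cons x t => simp_all

lemma head?_append_left {l t : List V} (h : l ≠ []) : (l ++ t).head? = l.head? := by
  cases l with
  | nil => simp at h
  | cons a l => rfl

lemma exists_dup_decomp {l : List V} (h : ¬ l.Nodup) :
    ∃ a l₁ l₂ l₃, l = l₁ ++ a :: l₂ ++ a :: l₃ := by
  induction l with
  | nil => exact absurd List.nodup_nil h
  | cons a t ih =>
    by_cases ha : a ∈ t
    · obtain ⟨s, r, rfl⟩ := List.append_of_mem ha
      exact ⟨a, [], s, r, rfl⟩
    · have ht : ¬ t.Nodup := fun hn => h (List.nodup_cons.mpr ⟨ha, hn⟩)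
      obtain ⟨b, l₁, l₂, l₃, heq⟩ := ih ht
      exact ⟨b, a :: l₁, l₂, l₃, by rw [heq]; rfl⟩

lemma first_hit {P : V → Prop} {l : List V} (hex : ∃ x ∈ l, P x) :
    ∃ l₁ k t, l = l₁ ++ k :: t ∧ P k ∧ ∀ x ∈ l₁, ¬ P x := by
  induction l with
  | nil => obtain ⟨x, hx, -⟩ := hex; simp at hx
  | cons a t ih =>
    by_cases hPa : P a
    · exact ⟨[], a, t, rfl, hPa, by simp⟩
    · have hex' : ∃ x ∈ t, P x := by
        obtain ⟨x, hx, hPx⟩ := hex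
        rcases List.mem_cons.mp hx with rfl | hx
        · exact absurd hPx hPa
        · exact ⟨x, hx, hPx⟩
      obtain ⟨l₁, k, t', heq, hk, hl₁⟩ := ih hex'
      refine ⟨a :: l₁, k, t', by rw [heq]; rfl, hk, ?_⟩
      intro x hx
      rcases List.mem_cons.mp hx with rfl | hx
      · exact hPa
      · exact hl₁ x hx

lemma exists_upath_of_chain {H : V → V → Prop} :
    ∀ (n : ℕ) (l : List V) (v w : V), l.length ≤ n → l.Chain' H → l.head? = some v →
      l.getLast? = some w → v ≠ w →
      ∃ l', IsUPath H l' v w ∧ ∀ x ∈ l', x ∈ l := by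
  intro n
  induction n with
  | zero =>
    intro l v w hlen _ hh _ _
    have : l = [] := List.length_eq_zero_iff.mp (Nat.le_zero.mp hlen)
    subst this; simp at hh
  | succ n ih =>
    intro l v w hlen hc hh hg hvw
    by_cases hnd : l.Nodup
    · refine ⟨l, ⟨hc, hnd, ?_, hh, hg⟩, fun x hx => hx⟩
      match l with
      | [] => simp at hh
      | [a] => simp_all
      | a :: b :: t => simp
    · obtain ⟨a, l₁, l₂, l₃, rfl⟩ := exists_dup_decomp hnd
      have hc2 : (l₁ ++ a :: l₃).Chain' H := by
        rw [List.Chain', List.isChain_append] at hc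
        obtain ⟨h₁, h₂, hj⟩ := hc
        rw [List.isChain_append] at h₁
        rw [List.Chain', List.isChain_append]
        refine ⟨h₁.1, h₂, ?_⟩
        intro x hx y hy
        have hya : a = y := by simpa using hy
        subst hya
        exact h₁.2.2 x hx a rfl
      have hh2 : (l₁ ++ a :: l₃).head? = some v := by
        rw [← hh]; cases l₁ <;> rfl
      have hg2 : (l₁ ++ a :: l₃).getLast? = some w := by
        rw [← hg, List.getLast?_append_cons, List.getLast?_append_cons]
      have hlen2 : (l₁ ++ a :: l₃).length ≤ n := by
        simp only [List.length_append, List.length_cons] at hlen ⊢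
        omega
      obtain ⟨l', hp, hsub⟩ := ih _ v w hlen2 hc2 hh2 hg2 hvw
      refine ⟨l', hp, fun x hx => ?_⟩
      have := hsub x hx
      simp only [List.mem_append, List.mem_cons] at this ⊢
      tauto


/-- A walk in `H`: nonempty chain from `v` to `w`. -/
def Wk (H : V → V → Prop) (l : List V) (v w : V) : Prop :=
  l.Chain' H ∧ l.head? = some v ∧ l.getLast? = some w

lemma Wk.trans {H : V → V → Prop} {l₁ l₂ : List V} {v x w : V}
    (h₁ : Wk H l₁ v x) (h₂ : Wk H l₂ x w) :
    ∃ l, Wk H l v w ∧ ∀ y ∈ l, y ∈ l₁ ∨ y ∈ l₂ := by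
  obtain ⟨hc₁, hh₁, hg₁⟩ := h₁
  obtain ⟨hc₂, hh₂, hg₂⟩ := h₂
  cases l₂ with
  | nil => simp at hh₂
  | cons x' t =>
    have hx' : x' = x := by simpa using hh₂
    subst hx'
    have hl₁ne : l₁ ≠ [] := by rintro rfl; simp at hh₁
    refine ⟨l₁ ++ t, ⟨?_, ?_, ?_⟩, ?_⟩
    · rw [List.Chain', List.isChain_append]
      refine ⟨hc₁, hc₂.tail, ?_⟩
      intro p hp q hq
      have hpx : x' = p := by rw [hg₁] at hp; simpa using hp
      subst hpx
      exact (List.isChain_cons.mp hc₂).1 q hq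
    · rw [head?_append_left hl₁ne]; exact hh₁
    · cases t with
      | nil =>
        have : x' = w := by simpa using hg₂
        subst this; simpa using hg₁
      | cons c r =>
        rw [List.getLast?_append_cons]
        rw [List.getLast?_cons_cons] at hg₂
        exact hg₂
    · intro y hy
      rcases List.mem_append.mp hy with hy | hy
      · exact Or.inl hy
      · exact Or.inr (List.mem_cons_of_mem _ hy)

lemma Wk.rev {H : V → V → Prop} (hs : ∀ a b, H a b → H b a) {l : List V} {v w : V}
    (h : Wk H l v w) : Wk H l.reverse w v :=
  ⟨List.isChain_reverse.mpr (h.1.imp fun {a b} hab => hs a b hab), by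
    rw [List.head?_reverse]; exact h.2.2, by rw [List.getLast?_reverse]; exact h.2.1⟩

lemma chain'_mono_mem {R S : V → V → Prop} :
    ∀ {l : List V}, l.Chain' R → (∀ x ∈ l, ∀ y ∈ l, R x y → S x y) → l.Chain' S
  | [], _, _ => List.isChain_nil
  | [a], _, _ => List.isChain_singleton a
  | a :: b :: t, hc, hm => by
    rw [List.Chain', List.isChain_cons_cons] at hc ⊢
    refine ⟨hm a (by simp) b (by simp) hc.1, chain'_mono_mem hc.2 ?_⟩
    intro x hx y hy hxy
    exact hm x (List.mem_cons_of_mem _ hx) y (List.mem_cons_of_mem _ hy) hxy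

lemma mg_mem {E : V → V → Prop} {Z S : Set V} {x y : V}
    (h : moralGraph (inducedGraph (delOut E Z) S) x y) : x ∈ S ∧ y ∈ S := by
  obtain ⟨-, h | h | ⟨c, hc₁, hc₂⟩⟩ := h
  · exact ⟨h.2.1, h.2.2⟩
  · exact ⟨h.2.2, h.2.1⟩
  · exact ⟨hc₁.2.1, hc₂.2.1⟩

lemma moral_symm {R : V → V → Prop} {x y : V} (h : moralGraph R x y) : moralGraph R y x := by
  obtain ⟨hne, h⟩ := h
  exact ⟨hne.symm, by tauto⟩

lemma mg_transfer {E : V → V → Prop} {Z₁ Z₂ S T : Set V} (hST : S ⊆ T) {x y : V}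
    (hx : x ∉ Z₂) (hy : y ∉ Z₂) (h : moralGraph (inducedGraph (delOut E Z₁) S) x y) :
    moralGraph (inducedGraph (delOut E Z₂) T) x y := by
  obtain ⟨hne, h | h | ⟨c, hc₁, hc₂⟩⟩ := h
  · exact ⟨hne, Or.inl ⟨⟨h.1.1, hx⟩, hST h.2.1, hST h.2.2⟩⟩
  · exact ⟨hne, Or.inr (Or.inl ⟨⟨h.1.1, hy⟩, hST h.2.1, hST h.2.2⟩)⟩
  · exact ⟨hne, Or.inr (Or.inr ⟨c, ⟨⟨hc₁.1.1, hx⟩, hST hc₁.2.1, hST hc₁.2.2⟩,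
      ⟨⟨hc₂.1.1, hy⟩, hST hc₂.2.1, hST hc₂.2.2⟩⟩)⟩

lemma mg_into_del {E : V → V → Prop} {Z S : Set V} {x d : V} (hd : d ∈ Z)
    (h : moralGraph (inducedGraph (delOut E Z) S) x d) :
    E x d ∧ x ∉ Z ∧ x ∈ S ∧ d ∈ S ∧ x ≠ d := by
  obtain ⟨hne, h | h | ⟨c, hc₁, hc₂⟩⟩ := h
  · exact ⟨h.1.1, h.1.2, h.2.1, h.2.2, hne⟩
  · exact absurd hd h.1.2
  · exact absurd hd hc₂.1.2

lemma mg_of_edge {E : V → V → Prop} {Z T : Set V} {x y : V} (hxy : E x y) (hne : x ≠ y)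
    (hx : x ∈ T) (hy : y ∈ T) (hz : x ∉ Z) :
    moralGraph (inducedGraph (delOut E Z) T) x y :=
  ⟨hne, Or.inl ⟨⟨hxy, hz⟩, hx, hy⟩⟩

lemma chain'_E_to_moral {E : V → V → Prop} (hE : ∀ j k, E j k → j ≠ k) {Z T : Set V} :
    ∀ {l : List V}, l.Chain' E → (∀ x ∈ l, x ∈ T) → (∀ x ∈ l.dropLast, x ∉ Z) →
      l.Chain' (moralGraph (inducedGraph (delOut E Z) T))
  | [], _, _, _ => List.isChain_nil
  | [a], _, _, _ => List.isChain_singleton a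
  | a :: b :: t, hc, hT, hZ => by
    rw [List.Chain', List.isChain_cons_cons] at hc
    have hd : (a :: b :: t).dropLast = a :: (b :: t).dropLast := by
      rw [List.dropLast_cons_of_ne_nil (by simp)]
    rw [List.Chain', List.isChain_cons_cons]
    refine ⟨mg_of_edge hc.1 (hE _ _ hc.1) (hT a (by simp)) (hT b (by simp)) ?_,
      chain'_E_to_moral hE hc.2 (fun x hx => hT x (List.mem_cons_of_mem _ hx)) ?_⟩
    · apply hZ; rw [hd]; simp
    · intro x hx; apply hZ; rw [hd]; exact List.mem_cons_of_mem _ hx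

lemma AnSet_mono {E : V → V → Prop} {X Y : Set V} (h : X ⊆ Y) : AnSet E X ⊆ AnSet E Y := by
  intro x hx
  rcases hx with hx | ⟨hxX, a, ha, hp⟩
  · exact Or.inl (h hx)
  · by_cases hxY : x ∈ Y
    · exact Or.inl hxY
    · exact Or.inr ⟨hxY, a, h ha, hp⟩

lemma mem_AnSet_of_chain {E : V → V → Prop} {X : Set V} {l : List V} {z x : V}
    (hc : l.Chain' E) (hnd : l.Nodup) (hg : l.getLast? = some z) (hz : z ∈ X)
    (hx : x ∈ l) : x ∈ AnSet E X := by
  obtain ⟨s, t, rfl⟩ := List.append_of_mem hx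
  have hsuf : (x :: t).Chain' E := hc.suffix ⟨s, rfl⟩
  have hnd' : (x :: t).Nodup := hnd.sublist (List.sublist_append_right s _)
  rw [List.getLast?_append_cons] at hg
  cases t with
  | nil =>
    have : x = z := by simpa using hg
    subst this
    exact Or.inl hz
  | cons b r =>
    have hpath : DirPathConn E x z :=
      ⟨x :: b :: r, hsuf, hnd', by simp, rfl, hg⟩
    by_cases hxX : x ∈ X
    · exact Or.inl hxX
    · exact Or.inr ⟨hxX, z, hz, hpath⟩

lemma escape {E : V → V → Prop} {X Y : Set V} {u : V} (hu : u ∈ AnSet E X) :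
    ∃ (l : List V) (k : V), l.Chain' E ∧ l ≠ [] ∧ l.head? = some u ∧
      l.getLast? = some k ∧ k ∈ X ∪ Y ∧ (∀ x ∈ l, x ∈ AnSet E X) ∧
      (∀ x ∈ l.dropLast, x ∉ X ∪ Y) := by
  by_cases hXY : u ∈ X ∪ Y
  · refine ⟨[u], u, List.isChain_singleton u, by simp, rfl, rfl, hXY, ?_, by simp⟩
    intro x hx
    have : x = u := by simpa using hx
    subst this; exact hu
  · have huX : u ∉ X := fun h => hXY (Or.inl h)
    rcases hu with hu | ⟨-, z, hzX, L, hcL, hndL, hlenL, hhL, hgL⟩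
    · exact absurd hu huX
    · have hzmem : z ∈ L := mem_of_getLast?_eq hgL
      obtain ⟨l₁, k, t, heq, hk, hl₁⟩ :=
        first_hit (P := fun x => x ∈ X ∪ Y) ⟨z, hzmem, Or.inl hzX⟩
      refine ⟨l₁ ++ [k], k, ?_, by simp, ?_, List.getLast?_concat, hk, ?_, ?_⟩
      · exact hcL.prefix ⟨t, by rw [heq]; simp⟩
      · have : (l₁ ++ [k]).head? = L.head? := by rw [heq]; cases l₁ <;> rfl
        rw [this, hhL]
      · intro x hx
        have hxL : x ∈ L := by
          rw [heq]
          rcases List.mem_append.mp hx with hx | hx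
          · exact List.mem_append.mpr (Or.inl hx)
          · simp_all
        exact mem_AnSet_of_chain hcL hndL hgL hzX hxL
      · rw [List.dropLast_concat]
        exact hl₁


lemma uSep_no_walk {H : V → V → Prop} {X Y Z : Set V} (h : uSep H X Y Z)
    {l : List V} {v w : V} (hwk : Wk H l v w) (hvw : v ≠ w) (hv : v ∈ X) (hwY : w ∈ Y)
    (havoid : ∀ x ∈ l, x ∉ Z) : False := by
  obtain ⟨l', hp, hsub⟩ :=
    exists_upath_of_chain l.length l v w le_rfl hwk.1 hwk.2.1 hwk.2.2 hvw
  obtain ⟨c, hcZ, hcl⟩ := h v hv w hwY l' hp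
  exact havoid c (hsub c hcl) hcZ

end DeltaAux

set_option maxHeartbeats 1000000 in
/-- Conditional right decomposition for δ-separation. -/
theorem deltaSep_right_decomposition [Fintype V] (E : V → V → Prop)
    (hE : ∀ j k, E j k → j ≠ k) (A B C D : Set V) (hDB : D ⊆ B)
    (hBA : (B ∩ A) \ (C ∪ D) = ∅)
    (h1 : deltaSep E A B C)
    (h2 : deltaSep E B (A \ (C ∪ D)) (C ∪ D))
    (h3 : ∀ k ∈ C \ D,
      deltaSep E A {k} (C ∪ B) ∨ deltaSep E B {k} (C ∪ D ∪ A)) :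
    deltaSep E A D C := by
  classical
  have hBA' : ∀ x, x ∈ B → x ∈ A → x ∈ C ∨ x ∈ D := by
    intro x hxB hxA
    by_contra hcon
    push_neg at hcon
    have hx : x ∈ (B ∩ A) \ (C ∪ D) := ⟨⟨hxB, hxA⟩, fun h => h.elim hcon.1 hcon.2⟩
    rw [hBA] at hx
    exact hx
  unfold deltaSep deltaSepDisjoint at h1 h2 ⊢
  have hSeq : (A \ (D ∪ C) ∪ D ∪ C \ D : Set V) = A ∪ C ∪ D := by
    ext x; simp only [Set.mem_union, Set.mem_diff]; tauto
  have hTeq : (A \ (B ∪ C) ∪ B ∪ C \ B : Set V) = A ∪ B ∪ C := by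
    ext x; simp only [Set.mem_union, Set.mem_diff]; tauto
  have hT2eq : (B \ (A \ (C ∪ D) ∪ (C ∪ D)) ∪ A \ (C ∪ D) ∪ (C ∪ D) \ (A \ (C ∪ D)) : Set V)
      = A ∪ B ∪ C := by
    ext x
    have h1x := hBA' x
    have h2x := @hDB x
    simp only [Set.mem_union, Set.mem_diff]
    tauto
  rw [hSeq]
  rw [hTeq] at h1
  rw [hT2eq] at h2
  have hST : AnSet E (A ∪ C ∪ D) ⊆ AnSet E (A ∪ B ∪ C) := by
    apply DeltaAux.AnSet_mono
    intro x hx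
    rcases hx with (hx | hx) | hx
    · exact Or.inl (Or.inl hx)
    · exact Or.inr hx
    · exact Or.inl (Or.inr (hDB hx))
  intro v hv w hw l hl
  by_contra hnc
  push_neg at hnc
  obtain ⟨hlc, hlnd, hllen, hlh, hlg⟩ := hl
  -- Step 1 : cut at the first vertex of D
  obtain ⟨p₁, d₁, t₁, heq₁, hd₁D, hp₁D⟩ :=
    DeltaAux.first_hit (P := fun x => x ∈ D) ⟨w, DeltaAux.mem_of_getLast?_eq hlg, hw⟩
  have hπ₁pre : (p₁ ++ [d₁]) <+: l := ⟨t₁, by rw [heq₁]; simp⟩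
  have hπ₁c : (p₁ ++ [d₁]).Chain' (moralGraph (inducedGraph (delOut E D) (AnSet E (A ∪ C ∪ D)))) :=
    hlc.prefix hπ₁pre
  have hπ₁h : (p₁ ++ [d₁]).head? = some v := by
    rw [← hlh, heq₁]; cases p₁ <;> rfl
  have hπ₁g : (p₁ ++ [d₁]).getLast? = some d₁ := List.getLast?_concat
  have hπ₁nd : (p₁ ++ [d₁]).Nodup := hlnd.sublist hπ₁pre.sublist
  have hπ₁sub : ∀ x ∈ p₁ ++ [d₁], x ∈ l := fun x hx => hπ₁pre.sublist.subset hx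
  have hπ₁notD : ∀ x ∈ p₁ ++ [d₁], x ≠ d₁ → x ∉ D := by
    intro x hx hxd
    rcases List.mem_append.mp hx with hx | hx
    · exact hp₁D x hx
    · simp at hx; exact absurd hx hxd
  -- Step 2 : cut at the last vertex of A \ (C ∪ D)
  have hv' : v ∈ A \ (C ∪ D) := ⟨hv.1, fun h => hv.2 (h.elim Or.inr Or.inl)⟩
  have hπ₁rev : DeltaAux.Wk _ (p₁ ++ [d₁]).reverse d₁ v :=
    DeltaAux.Wk.rev (fun _ _ h => DeltaAux.moral_symm h) ⟨hπ₁c, hπ₁h, hπ₁g⟩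
  obtain ⟨q, a, r, heq₂, haA', hqA'⟩ :=
    DeltaAux.first_hit (P := fun x => x ∈ A \ (C ∪ D))
      ⟨v, by rw [List.mem_reverse]; exact DeltaAux.mem_of_head?_eq hπ₁h, hv'⟩
  have hqa_pre : (q ++ [a]) <+: (p₁ ++ [d₁]).reverse := ⟨r, by rw [heq₂]; simp⟩
  have hwk₂' : DeltaAux.Wk _ (q ++ [a]) d₁ a :=
    ⟨hπ₁rev.1.prefix hqa_pre, by rw [← hπ₁rev.2.1, heq₂]; cases q <;> rfl,
      List.getLast?_concat⟩
  have hrevqa : (q ++ [a]).reverse = a :: q.reverse := by simp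
  have hwk₂ : DeltaAux.Wk (moralGraph (inducedGraph (delOut E D) (AnSet E (A ∪ C ∪ D))))
      (a :: q.reverse) a d₁ := by
    rw [← hrevqa]
    exact DeltaAux.Wk.rev (fun _ _ h => DeltaAux.moral_symm h) hwk₂'
  have hπ₂mem : ∀ x ∈ a :: q.reverse, x ∈ p₁ ++ [d₁] := by
    intro x hx
    have hx' : x ∈ q ++ [a] := by
      rw [← List.mem_reverse, hrevqa]; exact hx
    have hx'' : x ∈ (p₁ ++ [d₁]).reverse := hqa_pre.sublist.subset hx'
    rwa [List.mem_reverse] at hx''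
  have hπ₂l : ∀ x ∈ a :: q.reverse, x ∈ l := fun x hx => hπ₁sub x (hπ₂mem x hx)
  have hπ₂nd : (a :: q.reverse).Nodup := by
    rw [← hrevqa]
    exact List.nodup_reverse.mpr ((List.nodup_reverse.mpr hπ₁nd).sublist hqa_pre.sublist)
  have hπ₂notCD : ∀ x ∈ a :: q.reverse, x ∉ C \ D := fun x hx hxCD => hnc x hxCD (hπ₂l x hx)
  have hint : ∀ x ∈ q.reverse, x ≠ d₁ → x ∉ A ∪ C ∪ D := by
    intro x hx hxd hxACD
    have hxπ₁ : x ∈ p₁ ++ [d₁] := hπ₂mem x (List.mem_cons_of_mem _ hx)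
    have hxD : x ∉ D := hπ₁notD x hxπ₁ hxd
    have hxC : x ∉ C := fun hc => hnc x ⟨hc, hxD⟩ (hπ₁sub x hxπ₁)
    have hxA' : x ∉ A \ (C ∪ D) := hqA' x (List.mem_reverse.mp hx)
    rcases hxACD with (hxA | hxC') | hxD'
    · exact hxA' ⟨hxA, fun h => h.elim hxC hxD⟩
    · exact hxC hxC'
    · exact hxD hxD'
  have hag : (a :: q.reverse).getLast? = some d₁ := hwk₂.2.2
  have haD : a ∉ D := fun h => haA'.2 (Or.inr h)
  have haC : a ∉ C := fun h => haA'.2 (Or.inl h)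
  have haB : a ∉ B := fun hB => (hBA' a hB haA'.1).elim haC haD
  have had₁ : a ≠ d₁ := fun h => haD (h ▸ hd₁D)
  have haABC : a ∈ A \ (B ∪ C) := ⟨haA'.1, fun h => h.elim haB haC⟩
  by_cases hBint : ∃ x ∈ q.reverse, x ≠ d₁ ∧ x ∈ B
  · -- Case 2: some interior vertex of the walk lies in B
    obtain ⟨b₀, hb₀ρ, hb₀d, hb₀B⟩ := hBint
    obtain ⟨p₂, b, t₂, heq₃, hbB, hp₂B⟩ :=
      DeltaAux.first_hit (P := fun x => x ∈ B) ⟨b₀, List.mem_cons_of_mem _ hb₀ρ, hb₀B⟩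
    have hbd : b ≠ d₁ := by
      rintro rfl
      have hb₀mem : b₀ ∈ t₂ := by
        have hmem : b₀ ∈ a :: q.reverse := List.mem_cons_of_mem _ hb₀ρ
        rw [heq₃] at hmem
        rcases List.mem_append.mp hmem with h | h
        · exact absurd hb₀B (hp₂B b₀ h)
        · rcases List.mem_cons.mp h with h | h
          · exact absurd h hb₀d
          · exact h
      cases t₂ with
      | nil => simp at hb₀mem
      | cons c₀ r₀ =>
        have hg' : (a :: q.reverse).getLast? = (c₀ :: r₀).getLast? := by
          rw [heq₃, List.getLast?_append_cons, List.getLast?_cons_cons]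
        have hd₁t : b ∈ c₀ :: r₀ := DeltaAux.mem_of_getLast?_eq (by rw [← hg', hag])
        have hnd' : (b :: c₀ :: r₀).Nodup := by
          have h' := hπ₂nd
          rw [heq₃] at h'
          exact h'.sublist (List.sublist_append_right _ _)
        exact (List.nodup_cons.mp hnd').1 hd₁t
    have hbπ₂ : b ∈ a :: q.reverse := by
      rw [heq₃]; exact List.mem_append.mpr (Or.inr (List.mem_cons_self))
    have hbρ : b ∈ q.reverse := by
      rcases List.mem_cons.mp hbπ₂ with h | h
      · exact absurd (h ▸ hbB) haB
      · exact h
    have hbACD : b ∉ A ∪ C ∪ D := hint b hbρ hbd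
    have hbA : b ∉ A := fun h => hbACD (Or.inl (Or.inl h))
    have hbC : b ∉ C := fun h => hbACD (Or.inl (Or.inr h))
    have hbD : b ∉ D := fun h => hbACD (Or.inr h)
    obtain ⟨mid, rfl⟩ : ∃ mid, p₂ = a :: mid := by
      cases p₂ with
      | nil =>
        exfalso
        have h1' := hwk₂.2.1
        rw [heq₃] at h1'
        have hab : b = a := by simpa using h1'
        exact haB (hab ▸ hbB)
      | cons a' mid =>
        have h1' := hwk₂.2.1
        rw [heq₃] at h1'
        have ha' : a' = a := by simpa using h1'
        exact ⟨mid, by rw [ha']⟩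
    rw [List.cons_append] at heq₃
    injection heq₃ with _ hρeq
    -- hρeq : q.reverse = mid ++ b :: t₂
    have hmidB : ∀ x ∈ mid, x ∉ B := fun x hx => hp₂B x (List.mem_cons_of_mem _ hx)
    have hmidρ : ∀ x ∈ mid, x ∈ q.reverse := fun x hx => by
      rw [hρeq]; exact List.mem_append.mpr (Or.inl hx)
    have hd₁bt : d₁ ∈ b :: t₂ := by
      have hg' : (a :: q.reverse).getLast? = (b :: t₂).getLast? := by
        rw [show (a :: q.reverse) = (a :: mid) ++ b :: t₂ by rw [List.cons_append, hρeq],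
          List.getLast?_append_cons]
      exact DeltaAux.mem_of_getLast?_eq (by rw [← hg', hag])
    have hmidd : ∀ x ∈ mid, x ≠ d₁ := by
      intro x hx
      rintro rfl
      have hnd' := hπ₂nd
      rw [show (a :: q.reverse) = (a :: mid) ++ b :: t₂ by rw [List.cons_append, hρeq]] at hnd'
      exact (List.nodup_append'.mp hnd').2.2 (List.mem_cons_of_mem _ hx) hd₁bt
    have hmidI : ∀ x ∈ mid, x ∉ A ∪ C ∪ D := fun x hx => hint x (hmidρ x hx) (hmidd x hx)
    obtain ⟨v₁, rtl, hv₁eq⟩ : ∃ v₁ rtl, mid ++ [b] = v₁ :: rtl := by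
      cases mid with
      | nil => exact ⟨b, [], rfl⟩
      | cons m ms => exact ⟨m, ms ++ [b], rfl⟩
    have hπ₃pre : ((a :: mid) ++ [b]) <+: a :: q.reverse :=
      ⟨t₂, by rw [List.cons_append, hρeq]; simp⟩
    have hπ₃eq : (a :: mid) ++ [b] = a :: v₁ :: rtl := by rw [List.cons_append, hv₁eq]
    have hπ₃c' : (a :: v₁ :: rtl).Chain'
        (moralGraph (inducedGraph (delOut E D) (AnSet E (A ∪ C ∪ D)))) := by
      rw [← hπ₃eq]; exact hwk₂.1.prefix hπ₃pre
    have hedge : moralGraph (inducedGraph (delOut E D) (AnSet E (A ∪ C ∪ D))) a v₁ :=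
      (List.isChain_cons_cons.mp hπ₃c').1
    have hrestc : (v₁ :: rtl).Chain'
        (moralGraph (inducedGraph (delOut E D) (AnSet E (A ∪ C ∪ D)))) :=
      (List.isChain_cons_cons.mp hπ₃c').2
    have haS : a ∈ AnSet E (A ∪ C ∪ D) := (DeltaAux.mg_mem hedge).1
    have hv₁S : v₁ ∈ AnSet E (A ∪ C ∪ D) := (DeltaAux.mg_mem hedge).2
    have hrestg : (v₁ :: rtl).getLast? = some b := by
      rw [← hv₁eq]; exact List.getLast?_concat
    have hrestmem : ∀ x ∈ v₁ :: rtl, x ∉ A ∪ C ∪ D := by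
      intro x hx
      rw [← hv₁eq] at hx
      rcases List.mem_append.mp hx with h | h
      · exact hmidI x h
      · simp at h; exact h ▸ hbACD
    have hv₁I : v₁ ∉ A ∪ C ∪ D := hrestmem v₁ (List.mem_cons_self)
    have hbsrc : b ∈ B \ (A \ (C ∪ D) ∪ (C ∪ D)) :=
      ⟨hbB, fun h => h.elim (fun h' => hbA h'.1) (fun h' => h'.elim hbC hbD)⟩
    by_cases hE1 : E v₁ a
    · -- Subcase 2a: last step into a; contradict h2 with walk b → a
      have hch2 : (v₁ :: rtl).Chain'
          (moralGraph (inducedGraph (delOut E (A \ (C ∪ D))) (AnSet E (A ∪ B ∪ C)))) := by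
        refine DeltaAux.chain'_mono_mem hrestc ?_
        intro x hx y hy hxy
        exact DeltaAux.mg_transfer hST (fun h => hrestmem x hx (Or.inl (Or.inl h.1)))
          (fun h => hrestmem y hy (Or.inl (Or.inl h.1))) hxy
      have hwrev : DeltaAux.Wk _ (v₁ :: rtl).reverse b v₁ :=
        DeltaAux.Wk.rev (fun _ _ h => DeltaAux.moral_symm h) ⟨hch2, rfl, hrestg⟩
      have hbridge : DeltaAux.Wk
          (moralGraph (inducedGraph (delOut E (A \ (C ∪ D))) (AnSet E (A ∪ B ∪ C))))
          [v₁, a] v₁ a :=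
        ⟨List.isChain_pair.mpr (DeltaAux.mg_of_edge hE1 (hE _ _ hE1) (hST hv₁S) (hST haS)
          (fun h => hv₁I (Or.inl (Or.inl h.1)))), rfl, rfl⟩
      obtain ⟨L, hLwk, hLmem⟩ := DeltaAux.Wk.trans hwrev hbridge
      refine DeltaAux.uSep_no_walk h2 hLwk (fun h => hbA (h ▸ haA'.1)) hbsrc haA' ?_
      intro x hx hxsep
      rcases hLmem x hx with hx' | hx'
      · rw [List.mem_reverse] at hx'
        exact hrestmem x hx' (hxsep.1.elim (fun hc => Or.inl (Or.inr hc)) Or.inr)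
      · rcases List.mem_cons.mp hx' with rfl | hx'
        · exact hv₁I (hxsep.1.elim (fun hc => Or.inl (Or.inr hc)) Or.inr)
        · have hxa : x = a := by simpa using hx'
          subst hxa
          exact hxsep.1.elim haC haD
    · -- Subcase 2b: the first edge leaves a
      obtain ⟨u, hEau, huS, hlink⟩ :
          ∃ u, E a u ∧ u ∈ AnSet E (A ∪ C ∪ D) ∧ (u = v₁ ∨ E v₁ u) := by
        obtain ⟨hne', hcase⟩ := hedge
        rcases hcase with h | h | ⟨c, hc₁, hc₂⟩
        · exact ⟨v₁, h.1.1, h.2.2, Or.inl rfl⟩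
        · exact absurd h.1.1 hE1
        · exact ⟨c, hc₁.1.1, hc₁.2.2, Or.inr hc₂.1.1⟩
      obtain ⟨μ, k, hμc, hμne, hμh, hμg, hkXY, hμAn, hμdrop⟩ :=
        DeltaAux.escape (E := E) (X := A ∪ C ∪ D) (Y := B) huS
      have hμdecomp : ∀ x ∈ μ, x ∈ μ.dropLast ∨ x = k := by
        intro x hx
        have hμsplit : μ.dropLast ++ [k] = μ :=
          List.dropLast_append_getLast? k (by rw [hμg]; rfl)
        rw [← hμsplit] at hx
        rcases List.mem_append.mp hx with h | h
        · exact Or.inl h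
        · simp at h; exact Or.inr h
      have hchainE : (a :: μ).Chain' E := List.isChain_cons.mpr
        ⟨fun y hy => by
          rw [hμh] at hy
          have : u = y := by simpa using hy
          exact this ▸ hEau, hμc⟩
      have hdropcons : (a :: μ).dropLast = a :: μ.dropLast :=
        List.dropLast_cons_of_ne_nil hμne
      have haμg : (a :: μ).getLast? = some k := by
        cases μ with
        | nil => exact absurd rfl hμne
        | cons u₀ μt => rw [List.getLast?_cons_cons]; exact hμg
      by_cases hkB : k ∈ B ∨ k ∈ D
      · -- escape lands in B: contradict h1 with directed walk a → k
        have hkB' : k ∈ B := hkB.elim id (fun h => hDB h)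
        have hmoral : (a :: μ).Chain'
            (moralGraph (inducedGraph (delOut E B) (AnSet E (A ∪ B ∪ C)))) := by
          refine DeltaAux.chain'_E_to_moral hE hchainE ?_ ?_
          · intro x hx
            rcases List.mem_cons.mp hx with rfl | hx
            · exact hST haS
            · exact hST (hμAn x hx)
          · intro x hx
            rw [hdropcons] at hx
            rcases List.mem_cons.mp hx with rfl | hx
            · exact haB
            · exact fun hB => hμdrop x hx (Or.inr hB)
        refine DeltaAux.uSep_no_walk h1 ⟨hmoral, rfl, haμg⟩
          (fun h => haB (h ▸ hkB')) haABC hkB' ?_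
        intro x hx hxCB
        rcases List.mem_cons.mp hx with rfl | hx
        · exact haC hxCB.1
        · rcases hμdecomp x hx with h | rfl
          · exact hμdrop x h (Or.inl (Or.inl (Or.inr hxCB.1)))
          · exact hxCB.2 hkB'
      · by_cases hkC : k ∈ C
        · -- escape lands in C \ D: use h3
          have hkCD : k ∈ C \ D := ⟨hkC, fun h => hkB (Or.inr h)⟩
          rcases h3 k hkCD with h3a | h3b
          · unfold deltaSep deltaSepDisjoint at h3a
            have hT3eq : (A \ ({k} ∪ (C ∪ B)) ∪ {k} ∪ (C ∪ B) \ {k} : Set V)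
                = A ∪ B ∪ C := by
              ext x
              constructor
              · rintro ((⟨hA2, hn⟩ | hk) | ⟨hCB, hnk⟩)
                · exact Or.inl (Or.inl hA2)
                · exact Or.inr (Set.mem_singleton_iff.mp hk ▸ hkC)
                · rcases hCB with hC2 | hB2
                  · exact Or.inr hC2
                  · exact Or.inl (Or.inr hB2)
              · rintro ((hA2 | hB2) | hC2)
                · by_cases hk : x = k
                  · exact Or.inl (Or.inr hk)
                  · by_cases hCB : x ∈ C ∪ B
                    · exact Or.inr ⟨hCB, hk⟩
                    · exact Or.inl (Or.inl ⟨hA2,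
                        fun h => h.elim (fun h' => hk (Set.mem_singleton_iff.mp h')) hCB⟩)
                · by_cases hk : x = k
                  · exact Or.inl (Or.inr hk)
                  · exact Or.inr ⟨Or.inr hB2, hk⟩
                · by_cases hk : x = k
                  · exact Or.inl (Or.inr hk)
                  · exact Or.inr ⟨Or.inl hC2, hk⟩
            rw [hT3eq] at h3a
            have hmoral : (a :: μ).Chain'
                (moralGraph (inducedGraph (delOut E {k}) (AnSet E (A ∪ B ∪ C)))) := by
              refine DeltaAux.chain'_E_to_moral hE hchainE ?_ ?_
              · intro x hx
                rcases List.mem_cons.mp hx with rfl | hx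
                · exact hST haS
                · exact hST (hμAn x hx)
              · intro x hx
                rw [hdropcons] at hx
                rcases List.mem_cons.mp hx with rfl | hx
                · exact fun h => haC (Set.mem_singleton_iff.mp h ▸ hkC)
                · exact fun h => hμdrop x hx
                    (Or.inl (Or.inl (Or.inr ((Set.mem_singleton_iff.mp h).symm ▸ hkC))))
            refine DeltaAux.uSep_no_walk h3a ⟨hmoral, rfl, haμg⟩
              (fun h => haC (h ▸ hkC)) ?_ rfl ?_
            · exact ⟨haA'.1, fun h => h.elim
                (fun h' => haC (Set.mem_singleton_iff.mp h' ▸ hkC))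
                (fun h' => h'.elim haC haB)⟩
            · intro x hx hxsep
              rcases List.mem_cons.mp hx with rfl | hx
              · exact hxsep.1.elim haC haB
              · rcases hμdecomp x hx with h | rfl
                · exact hxsep.1.elim
                    (fun hc => hμdrop x h (Or.inl (Or.inl (Or.inr hc))))
                    (fun hb => hμdrop x h (Or.inr hb))
                · exact hxsep.2 rfl
          · unfold deltaSep deltaSepDisjoint at h3b
            have hT4eq : (B \ ({k} ∪ (C ∪ D ∪ A)) ∪ {k} ∪ (C ∪ D ∪ A) \ {k} : Set V)
                = A ∪ B ∪ C := by
              ext x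
              constructor
              · rintro ((⟨hB2, hn⟩ | hk) | ⟨hCDA, hnk⟩)
                · exact Or.inl (Or.inr hB2)
                · exact Or.inr (Set.mem_singleton_iff.mp hk ▸ hkC)
                · rcases hCDA with (hC2 | hD2) | hA2
                  · exact Or.inr hC2
                  · exact Or.inl (Or.inr (hDB hD2))
                  · exact Or.inl (Or.inl hA2)
              · rintro ((hA2 | hB2) | hC2)
                · by_cases hk : x = k
                  · exact Or.inl (Or.inr hk)
                  · exact Or.inr ⟨Or.inr hA2, hk⟩
                · by_cases hk : x = k
                  · exact Or.inl (Or.inr hk)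
                  · by_cases hCDA : x ∈ C ∪ D ∪ A
                    · exact Or.inr ⟨hCDA, hk⟩
                    · exact Or.inl (Or.inl ⟨hB2,
                        fun h => h.elim (fun h' => hk (Set.mem_singleton_iff.mp h')) hCDA⟩)
                · by_cases hk : x = k
                  · exact Or.inl (Or.inr hk)
                  · exact Or.inr ⟨Or.inl (Or.inl hC2), hk⟩
            rw [hT4eq] at h3b
            have hch : (v₁ :: rtl).Chain'
                (moralGraph (inducedGraph (delOut E {k}) (AnSet E (A ∪ B ∪ C)))) := by
              refine DeltaAux.chain'_mono_mem hrestc ?_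
              intro x hx y hy hxy
              exact DeltaAux.mg_transfer hST
                (fun h => hrestmem x hx
                  (Or.inl (Or.inr ((Set.mem_singleton_iff.mp h).symm ▸ hkC))))
                (fun h => hrestmem y hy
                  (Or.inl (Or.inr ((Set.mem_singleton_iff.mp h).symm ▸ hkC)))) hxy
            have hwrevk : DeltaAux.Wk _ (v₁ :: rtl).reverse b v₁ :=
              DeltaAux.Wk.rev (fun _ _ h => DeltaAux.moral_symm h) ⟨hch, rfl, hrestg⟩
            have hμwk : DeltaAux.Wk
                (moralGraph (inducedGraph (delOut E {k}) (AnSet E (A ∪ B ∪ C)))) μ u k :=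
              ⟨DeltaAux.chain'_E_to_moral hE hμc (fun x hx => hST (hμAn x hx))
                (fun x hx h => hμdrop x hx
                  (Or.inl (Or.inl (Or.inr ((Set.mem_singleton_iff.mp h).symm ▸ hkC))))),
                hμh, hμg⟩
            have hW2 : ∃ L₂, DeltaAux.Wk
                (moralGraph (inducedGraph (delOut E {k}) (AnSet E (A ∪ B ∪ C)))) L₂ v₁ k ∧
                ∀ x ∈ L₂, x = v₁ ∨ x ∈ μ := by
              rcases hlink with rfl | hEv₁u
              · exact ⟨μ, hμwk, fun x hx => Or.inr hx⟩
              · have hbr : DeltaAux.Wk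
                    (moralGraph (inducedGraph (delOut E {k}) (AnSet E (A ∪ B ∪ C))))
                    [v₁, u] v₁ u :=
                  ⟨List.isChain_pair.mpr (DeltaAux.mg_of_edge hEv₁u (hE _ _ hEv₁u)
                    (hST hv₁S) (hST huS)
                    (fun h => hv₁I (Or.inl (Or.inr ((Set.mem_singleton_iff.mp h).symm ▸ hkC))))),
                    rfl, rfl⟩
                obtain ⟨L₂, hL₂, hmem₂⟩ := DeltaAux.Wk.trans hbr hμwk
                refine ⟨L₂, hL₂, fun x hx => ?_⟩
                rcases hmem₂ x hx with hx' | hx'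
                · rcases List.mem_cons.mp hx' with rfl | hx'
                  · exact Or.inl rfl
                  · have hxu : x = u := by simpa using hx'
                    exact Or.inr (hxu ▸ DeltaAux.mem_of_head?_eq hμh)
                · exact Or.inr hx'
            obtain ⟨L₂, hL₂wk, hL₂mem⟩ := hW2
            obtain ⟨L, hLwk, hLmem⟩ := DeltaAux.Wk.trans hwrevk hL₂wk
            refine DeltaAux.uSep_no_walk h3b hLwk (fun h => hbC (h ▸ hkC)) ?_ rfl ?_
            · exact ⟨hbB, fun h => h.elim
                (fun h' => hbC ((Set.mem_singleton_iff.mp h').symm ▸ hkC))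
                (fun h' => h'.elim (fun h'' => h''.elim hbC hbD) hbA)⟩
            · intro x hx hxsep
              have hxACD : x ∈ A ∪ C ∪ D := by
                rcases hxsep.1 with (h | h) | h
                · exact Or.inl (Or.inr h)
                · exact Or.inr h
                · exact Or.inl (Or.inl h)
              rcases hLmem x hx with hx' | hx'
              · rw [List.mem_reverse] at hx'
                exact hrestmem x hx' hxACD
              · rcases hL₂mem x hx' with rfl | hxμ
                · exact hv₁I hxACD
                · rcases hμdecomp x hxμ with h | rfl
                  · exact hμdrop x h (Or.inl hxACD)
                  · exact hxsep.2 rfl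
        · -- escape lands in A \ (C ∪ D): contradict h2 with walk b → k
          have hkA : k ∈ A := by
            rcases hkXY with (hk | hk) | hk
            · rcases hk with hk | hk
              · exact hk
              · exact absurd hk hkC
            · exact absurd (Or.inr hk) hkB
            · exact absurd (Or.inl hk) hkB
          have hkA' : k ∈ A \ (C ∪ D) :=
            ⟨hkA, fun h => h.elim hkC (fun hd => hkB (Or.inr hd))⟩
          have hch : (v₁ :: rtl).Chain'
              (moralGraph (inducedGraph (delOut E (A \ (C ∪ D))) (AnSet E (A ∪ B ∪ C)))) := by
            refine DeltaAux.chain'_mono_mem hrestc ?_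
            intro x hx y hy hxy
            exact DeltaAux.mg_transfer hST
              (fun h => hrestmem x hx (Or.inl (Or.inl h.1)))
              (fun h => hrestmem y hy (Or.inl (Or.inl h.1))) hxy
          have hwrev2 : DeltaAux.Wk _ (v₁ :: rtl).reverse b v₁ :=
            DeltaAux.Wk.rev (fun _ _ h => DeltaAux.moral_symm h) ⟨hch, rfl, hrestg⟩
          have hμwk : DeltaAux.Wk
              (moralGraph (inducedGraph (delOut E (A \ (C ∪ D))) (AnSet E (A ∪ B ∪ C)))) μ u k :=
            ⟨DeltaAux.chain'_E_to_moral hE hμc (fun x hx => hST (hμAn x hx))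
              (fun x hx h => hμdrop x hx (Or.inl (Or.inl (Or.inl h.1)))),
              hμh, hμg⟩
          have hW2 : ∃ L₂, DeltaAux.Wk
              (moralGraph (inducedGraph (delOut E (A \ (C ∪ D))) (AnSet E (A ∪ B ∪ C)))) L₂ v₁ k ∧
              ∀ x ∈ L₂, x = v₁ ∨ x ∈ μ := by
            rcases hlink with rfl | hEv₁u
            · exact ⟨μ, hμwk, fun x hx => Or.inr hx⟩
            · have hbr : DeltaAux.Wk
                  (moralGraph (inducedGraph (delOut E (A \ (C ∪ D))) (AnSet E (A ∪ B ∪ C))))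
                  [v₁, u] v₁ u :=
                ⟨List.isChain_pair.mpr (DeltaAux.mg_of_edge hEv₁u (hE _ _ hEv₁u)
                  (hST hv₁S) (hST huS)
                  (fun h => hv₁I (Or.inl (Or.inl h.1)))), rfl, rfl⟩
              obtain ⟨L₂, hL₂, hmem₂⟩ := DeltaAux.Wk.trans hbr hμwk
              refine ⟨L₂, hL₂, fun x hx => ?_⟩
              rcases hmem₂ x hx with hx' | hx'
              · rcases List.mem_cons.mp hx' with rfl | hx'
                · exact Or.inl rfl
                · have hxu : x = u := by simpa using hx'
                  exact Or.inr (hxu ▸ DeltaAux.mem_of_head?_eq hμh)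
              · exact Or.inr hx'
          obtain ⟨L₂, hL₂wk, hL₂mem⟩ := hW2
          obtain ⟨L, hLwk, hLmem⟩ := DeltaAux.Wk.trans hwrev2 hL₂wk
          refine DeltaAux.uSep_no_walk h2 hLwk (fun h => hbA (h ▸ hkA)) hbsrc hkA' ?_
          intro x hx hxsep
          have hxACD : x ∈ A ∪ C ∪ D :=
            hxsep.1.elim (fun hc => Or.inl (Or.inr hc)) Or.inr
          rcases hLmem x hx with hx' | hx'
          · rw [List.mem_reverse] at hx'
            exact hrestmem x hx' hxACD
          · rcases hL₂mem x hx' with rfl | hxμ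
            · exact hv₁I hxACD
            · rcases hμdecomp x hxμ with h | rfl
              · exact hμdrop x h (Or.inl hxACD)
              · exact hxsep.2 hkA' 
  · -- Case 1: no interior vertex in B; contradict h1 directly
    push_neg at hBint
    have hnotB : ∀ x ∈ a :: q.reverse, x ≠ d₁ → x ∉ B := by
      intro x hx hxd
      rcases List.mem_cons.mp hx with rfl | hx
      · exact haB
      · exact hBint x hx hxd
    have hchB : (a :: q.reverse).Chain'
        (moralGraph (inducedGraph (delOut E B) (AnSet E (A ∪ B ∪ C)))) := by
      refine DeltaAux.chain'_mono_mem hwk₂.1 ?_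
      intro x hx y hy hxy
      by_cases hyd : y = d₁
      · subst hyd
        obtain ⟨he, hxD2, hxS, hdS, hxny⟩ := DeltaAux.mg_into_del hd₁D hxy
        exact DeltaAux.mg_of_edge he hxny (hST hxS) (hST hdS) (hnotB x hx hxny)
      · by_cases hxd : x = d₁
        · subst hxd
          obtain ⟨he, hyD2, hyS, hdS, hyny⟩ :=
            DeltaAux.mg_into_del hd₁D (DeltaAux.moral_symm hxy)
          exact DeltaAux.moral_symm
            (DeltaAux.mg_of_edge he hyny (hST hyS) (hST hdS) (hnotB y hy hyny))
        · exact DeltaAux.mg_transfer hST (hnotB x hx hxd) (hnotB y hy hyd) hxy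
    refine DeltaAux.uSep_no_walk h1 ⟨hchB, hwk₂.2.1, hwk₂.2.2⟩ had₁ haABC (hDB hd₁D) ?_
    intro x hx hxCB
    exact hπ₂notCD x hx ⟨hxCB.1, fun h => hxCB.2 (hDB h)⟩
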